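/- arXiv:1709.03860 — 2 statements merged into one kernel-verified Lean document; each statement's English description precedes it below -/
import Mathlib

section
/- Let V = V⁺ ⊕ V⁻ be a finite-dimensional complex inner product space as above, Γ the chirality operator (multiplication by i on V⁺ and by −i on V⁻), ω(x,y) = ⟨Γx, y⟩, and T an odd self-adjoint unitary on V. Let Λ_T = ker(T − id_V) be the (+1)-eigenspace of T. Then: (i) ω(x,y) = 0 for all x, y ∈ Λ_T; (ii) Γ(Λ_T) = ker(T + id_V) and Γ(Λ_T) equals the orthogonal complement of Λ_T in V, so V = Λ_T ⊕ Γ(Λ_T); and (iii) 2·dim Λ_T = dim V. In particular Λ_T is a Lagrangian subspace of (V, ω). -/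
/-- Let `V = V⁺ ⊕ V⁻` be a finite-dimensional complex inner ℂ product space with
chirality operator `Γ` (`i` on `V⁺`, `-i` on `V⁻`) and `ω x y = ⟪Γ x, y⟫`, and let
`T` be an odd self-adjoint unitary with `(+1)`-eigenspace `Λ_T = ker (T - id)`. Then
`ω` vanishes on `Λ_T`, `Γ(Λ_T) = ker (T + id)` is the orthogonal complement of `Λ_T`
(so `V = Λ_T ⊕ Γ(Λ_T)`), and `2 dim Λ_T = dim V`; i.e. `Λ_T` is Lagrangian. -/
theorem positive_eigenspace_is_lagrangian
    {V : Type*} [NormedAddCommGroup V] [InnerProductSpace ℂ V] [FiniteDimensional ℂ V]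
    (Vp Vm : Submodule ℂ V) (hcompl : IsCompl Vp Vm)
    (horth : ∀ x ∈ Vp, ∀ y ∈ Vm, (inner ℂ x y : ℂ) = 0)
    (Γ : V →ₗ[ℂ] V)
    (hΓp : ∀ x ∈ Vp, Γ x = Complex.I • x)
    (hΓm : ∀ x ∈ Vm, Γ x = (-Complex.I) • x)
    (T : V →ₗ[ℂ] V)
    (hsa : ∀ x y : V, (inner ℂ (T x) y : ℂ) = inner ℂ x (T y))
    (hsq : T ∘ₗ T = LinearMap.id)
    (hiso : ∀ x y : V, (inner ℂ (T x) (T y) : ℂ) = inner ℂ x y)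
    (hoddp : ∀ x ∈ Vp, T x ∈ Vm) (hoddm : ∀ x ∈ Vm, T x ∈ Vp) :
    (∀ x ∈ LinearMap.ker (T - LinearMap.id), ∀ y ∈ LinearMap.ker (T - LinearMap.id),
        (inner ℂ (Γ x) y : ℂ) = 0) ∧
    (LinearMap.ker (T - LinearMap.id)).map Γ = LinearMap.ker (T + LinearMap.id) ∧
    (LinearMap.ker (T - LinearMap.id)).map Γ = (LinearMap.ker (T - LinearMap.id))ᗮ ∧
    IsCompl (LinearMap.ker (T - LinearMap.id)) ((LinearMap.ker (T - LinearMap.id)).map Γ) ∧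
    2 * Module.finrank ℂ (LinearMap.ker (T - LinearMap.id)) = Module.finrank ℂ V := by
  set K : Submodule ℂ V := LinearMap.ker (T - LinearMap.id) with hK
  have hTT : ∀ v : V, T (T v) = v := by
    intro v
    have := LinearMap.ext_iff.mp hsq v
    simpa using this
  have hKmem : ∀ x : V, x ∈ K ↔ T x = x := by
    intro x; simp [hK, LinearMap.mem_ker, sub_eq_zero]
  have hKm : ∀ x : V, x ∈ LinearMap.ker (T + LinearMap.id) ↔ T x = -x := by
    intro x
    simp [LinearMap.mem_ker, add_eq_zero_iff_eq_neg]
  have hdecomp : ∀ v : V, ∃ p ∈ Vp, ∃ m ∈ Vm, v = p + m := by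
    intro v
    have hv : v ∈ Vp ⊔ Vm := by rw [hcompl.sup_eq_top]; trivial
    rcases Submodule.mem_sup.mp hv with ⟨p, hp, m, hm, h⟩
    exact ⟨p, hp, m, hm, h.symm⟩
  have hanti : ∀ v : V, T (Γ v) = - Γ (T v) := by
    intro v
    obtain ⟨p, hp, m, hm, rfl⟩ := hdecomp v
    have h1 : T (Γ (p + m)) = Complex.I • T p + (-Complex.I) • T m := by
      rw [map_add, hΓp p hp, hΓm m hm, map_add, map_smul, map_smul]
    have h2 : Γ (T (p + m)) = (-Complex.I) • T p + Complex.I • T m := by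
      rw [map_add, map_add, hΓm _ (hoddp p hp), hΓp _ (hoddm m hm)]
    rw [h1, h2]
    module
  have hanti' : ∀ v : V, Γ (T v) = - T (Γ v) := by
    intro v; rw [hanti, neg_neg]
  have hΓsq : ∀ v : V, Γ (Γ v) = -v := by
    intro v
    obtain ⟨p, hp, m, hm, rfl⟩ := hdecomp v
    rw [map_add, hΓp p hp, hΓm m hm, map_add, map_smul, map_smul, hΓp p hp, hΓm m hm,
      smul_smul, smul_smul]
    simp [Complex.I_mul_I]
    abel
  have hinj : Function.Injective Γ := by
    intro a b h
    have : -a = -b := by rw [← hΓsq a, ← hΓsq b, h]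
    simpa using this
  -- (i)
  have part1 : ∀ x ∈ K, ∀ y ∈ K, (inner ℂ (Γ x) y : ℂ) = 0 := by
    intro x hx y hy
    have hx' := (hKmem x).mp hx
    have hy' := (hKmem y).mp hy
    have h : (inner ℂ (Γ x) y : ℂ) = - inner ℂ (Γ x) y := by
      calc (inner ℂ (Γ x) y : ℂ) = inner ℂ (Γ (T x)) y := by rw [hx']
        _ = inner ℂ (-(T (Γ x))) y := by rw [hanti' x]
        _ = - inner ℂ (T (Γ x)) y := by rw [inner_neg_left]
        _ = - inner ℂ (Γ x) (T y) := by rw [hsa]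
        _ = - inner ℂ (Γ x) y := by rw [hy']
    have h2 : (2 : ℂ) * inner ℂ (Γ x) y = 0 := by linear_combination h
    have := mul_eq_zero.mp h2
    simpa using this
  -- (ii) map Γ K = ker (T + id)
  have part2 : K.map Γ = LinearMap.ker (T + LinearMap.id) := by
    apply le_antisymm
    · rintro _ ⟨x, hx, rfl⟩
      have hx' := (hKmem x).mp hx
      rw [hKm]
      rw [hanti, hx']
    · intro y hy
      have hy' := (hKm y).mp hy
      refine ⟨-Γ y, ?_, ?_⟩
      · show -Γ y ∈ K
        rw [hKmem]
        rw [map_neg, hanti, hy', map_neg, neg_neg]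
      · rw [map_neg, hΓsq, neg_neg]
  -- ker (T + id) = Kᗮ
  have part3' : LinearMap.ker (T + LinearMap.id) = Kᗮ := by
    apply le_antisymm
    · intro y hy
      have hy' := (hKm y).mp hy
      rw [Submodule.mem_orthogonal]
      intro x hx
      have hx' := (hKmem x).mp hx
      have h : (inner ℂ x y : ℂ) = - inner ℂ x y := by
        calc (inner ℂ x y : ℂ) = inner ℂ (T x) y := by rw [hx']
          _ = inner ℂ x (T y) := hsa _ _
          _ = - inner ℂ x y := by rw [hy', inner_neg_right]
      have h2 : (2 : ℂ) * inner ℂ x y = 0 := by linear_combination h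
      have := mul_eq_zero.mp h2
      simpa using this
    · intro x hx
      rw [Submodule.mem_orthogonal] at hx
      set a : V := (2 : ℂ)⁻¹ • (x + T x) with ha
      set b : V := (2 : ℂ)⁻¹ • (x - T x) with hb
      have hxab : x = a + b := by rw [ha, hb]; module
      have haK : a ∈ K := by
        rw [hKmem, ha, map_smul, map_add, hTT]
        module
      have hTb : T b = -b := by
        rw [hb, map_smul, map_sub, hTT]
        module
      have hab : (inner ℂ a b : ℂ) = 0 := by
        have h : (inner ℂ a b : ℂ) = - inner ℂ a b := by
          calc (inner ℂ a b : ℂ) = inner ℂ (T a) b := by rw [(hKmem a).mp haK]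
            _ = inner ℂ a (T b) := hsa _ _
            _ = - inner ℂ a b := by rw [hTb, inner_neg_right]
        have h2 : (2 : ℂ) * inner ℂ a b = 0 := by linear_combination h
        have := mul_eq_zero.mp h2
        simpa using this
      have hax : (inner ℂ a x : ℂ) = 0 := hx a haK
      have ha0 : a = 0 := by
        have : (inner ℂ a a : ℂ) = 0 := by
          have : (inner ℂ a (a + b) : ℂ) = 0 := by rw [← hxab]; exact hax
          rw [inner_add_right, hab, add_zero] at this
          exact this
        exact inner_self_eq_zero.mp this
      rw [hKm]
      have : x = b := by rw [hxab, ha0, zero_add]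
      rw [this]; exact hTb
  have part3 : K.map Γ = Kᗮ := part2.trans part3'
  have part4 : IsCompl K (K.map Γ) := by
    rw [part3]
    exact Submodule.isCompl_orthogonal_of_hasOrthogonalProjection
  refine ⟨part1, part2, part3, part4, ?_⟩
  have hrk : Module.finrank ℂ K = Module.finrank ℂ (K.map Γ) :=
    (Submodule.equivMapOfInjective Γ hinj K).finrank_eq
  have hsum : Module.finrank ℂ K + Module.finrank ℂ Kᗮ = Module.finrank ℂ V :=
    Submodule.finrank_add_finrank_orthogonal K
  rw [two_mul, hrk, part3] at *
  omega
end

section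
/- Let V = V⁺ ⊕ V⁻ be a finite-dimensional complex inner product space as above, with chirality operator Γ and form ω(x,y) = ⟨Γx, y⟩. The assignment T ↦ Λ_T = ker(T − id_V) is a bijection from the set of odd self-adjoint unitaries on V onto the set of Lagrangian subspaces of (V, ω). Its inverse sends a Lagrangian subspace L to the linear map equal to +id on L and to −id on the orthogonal complement L^⊥. -/
set_option linter.unusedSectionVars false
set_option maxHeartbeats 800000

open Module Submodule

section Aux

variable {V : Type*} [NormedAddCommGroup V] [InnerProductSpace ℂ V] [FiniteDimensional ℂ V]

lemma mem_ker_sub_iff (T : V →ₗ[ℂ] V) (x : V) :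
    x ∈ LinearMap.ker (T - LinearMap.id) ↔ T x = x := by
  simp [LinearMap.mem_ker, sub_eq_zero]

lemma mem_ker_add_iff (T : V →ₗ[ℂ] V) (x : V) :
    x ∈ LinearMap.ker (T + LinearMap.id) ↔ T x = -x := by
  rw [LinearMap.mem_ker, LinearMap.add_apply, LinearMap.id_apply, add_eq_zero_iff_eq_neg]

lemma invol_apply (T : V →ₗ[ℂ] V) (h : T ∘ₗ T = LinearMap.id) (x : V) : T (T x) = x := by
  have := LinearMap.ext_iff.mp h x
  simpa using this

lemma ker_finranks (T : V →ₗ[ℂ] V) (hinv : T ∘ₗ T = LinearMap.id) :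
    Module.finrank ℂ (LinearMap.ker (T - LinearMap.id)) +
      Module.finrank ℂ (LinearMap.ker (T + LinearMap.id)) = Module.finrank ℂ V := by
  have hsup : LinearMap.ker (T - LinearMap.id) ⊔ LinearMap.ker (T + LinearMap.id) = ⊤ := by
    rw [eq_top_iff]
    intro x _
    have h1 : (2:ℂ)⁻¹ • (x + T x) ∈ LinearMap.ker (T - LinearMap.id) := by
      rw [mem_ker_sub_iff, map_smul, map_add, invol_apply T hinv, add_comm]
    have h2 : (2:ℂ)⁻¹ • (x - T x) ∈ LinearMap.ker (T + LinearMap.id) := by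
      rw [mem_ker_add_iff, map_smul, map_sub, invol_apply T hinv]
      module
    have hx : x = (2:ℂ)⁻¹ • (x + T x) + (2:ℂ)⁻¹ • (x - T x) := by module
    rw [hx]
    exact Submodule.add_mem_sup h1 h2
  have hinf : LinearMap.ker (T - LinearMap.id) ⊓ LinearMap.ker (T + LinearMap.id) = ⊥ := by
    rw [eq_bot_iff]
    intro x hx
    rcases Submodule.mem_inf.mp hx with ⟨h1, h2⟩
    rw [mem_ker_sub_iff] at h1
    rw [mem_ker_add_iff] at h2
    have : (2:ℂ) • x = 0 :=
      (two_smul ℂ x).trans (eq_neg_iff_add_eq_zero.mp (h1.symm.trans h2))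
    rcases smul_eq_zero.mp this with h | h
    · exact absurd h two_ne_zero
    · simp [h]
  have := Submodule.finrank_sup_add_finrank_inf_eq
    (LinearMap.ker (T - LinearMap.id)) (LinearMap.ker (T + LinearMap.id))
  rw [hsup, hinf, finrank_top, finrank_bot] at this
  omega

lemma ker_add_eq_orth (T : V →ₗ[ℂ] V)
    (hsa : ∀ x y : V, (inner ℂ (T x) y : ℂ) = inner ℂ x (T y))
    (hinv : T ∘ₗ T = LinearMap.id) :
    LinearMap.ker (T + LinearMap.id) = (LinearMap.ker (T - LinearMap.id))ᗮ := by
  have hle : LinearMap.ker (T + LinearMap.id) ≤ (LinearMap.ker (T - LinearMap.id))ᗮ := by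
    intro y hy
    rw [mem_ker_add_iff] at hy
    rw [Submodule.mem_orthogonal]
    intro x hx
    rw [mem_ker_sub_iff] at hx
    have h1 : (inner ℂ x y : ℂ) = -(inner ℂ x y : ℂ) := by
      calc (inner ℂ x y : ℂ) = inner ℂ (T x) y := by rw [hx]
        _ = inner ℂ x (T y) := hsa x y
        _ = (inner ℂ x (-y) : ℂ) := by rw [hy]
        _ = -(inner ℂ x y : ℂ) := inner_neg_right x y
    linear_combination h1 / 2
  apply Submodule.eq_of_le_of_finrank_eq hle
  have h2 := ker_finranks T hinv
  have h3 := Submodule.finrank_add_finrank_orthogonal (LinearMap.ker (T - LinearMap.id))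
  omega

end Aux

section Gamma

variable {V : Type*} [NormedAddCommGroup V] [InnerProductSpace ℂ V] [FiniteDimensional ℂ V]
  (Vp Vm : Submodule ℂ V) (hcompl : IsCompl Vp Vm)
  (Γ : V →ₗ[ℂ] V)
  (hΓp : ∀ x ∈ Vp, Γ x = Complex.I • x)
  (hΓm : ∀ x ∈ Vm, Γ x = (-Complex.I) • x)

include hcompl in
lemma exists_decomp' (x : V) : ∃ a ∈ Vp, ∃ b ∈ Vm, x = a + b := by
  have hx : x ∈ Vp ⊔ Vm := by rw [hcompl.sup_eq_top]; trivial
  rcases Submodule.mem_sup.mp hx with ⟨a, ha, b, hb, h⟩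
  exact ⟨a, ha, b, hb, h.symm⟩

include hcompl hΓp hΓm in
lemma gamma_sq (x : V) : Γ (Γ x) = -x := by
  obtain ⟨a, ha, b, hb, rfl⟩ := exists_decomp' Vp Vm hcompl x
  have h1 : Γ (Γ a) = -a := by
    rw [hΓp a ha, map_smul, hΓp a ha, smul_smul, Complex.I_mul_I, neg_one_smul]
  have h2 : Γ (Γ b) = -b := by
    rw [hΓm b hb, map_smul, hΓm b hb, smul_smul]
    norm_num [Complex.I_mul_I]
  rw [map_add, map_add, h1, h2, neg_add]

include hcompl hΓp hΓm in
lemma gamma_inj : Function.Injective Γ := by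
  intro x y h
  have hx := gamma_sq Vp Vm hcompl Γ hΓp hΓm x
  have hy := gamma_sq Vp Vm hcompl Γ hΓp hΓm y
  rw [h, hy] at hx
  exact neg_injective hx.symm

include hcompl hΓp hΓm in
lemma mem_Vm_iff (z : V) : Γ z = (-Complex.I) • z ↔ z ∈ Vm := by
  constructor
  · intro h
    obtain ⟨a, ha, b, hb, rfl⟩ := exists_decomp' Vp Vm hcompl z
    have h1 : Γ a + Γ b = (-Complex.I) • a + (-Complex.I) • b := by
      rw [← map_add, h, smul_add]
    rw [hΓp a ha, hΓm b hb] at h1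
    have h2 : (Complex.I - (-Complex.I)) • a = 0 := by
      rw [sub_smul, sub_eq_zero]
      exact add_right_cancel h1
    have h3 : Complex.I - (-Complex.I) ≠ 0 := by
      have : Complex.I - (-Complex.I) = 2 * Complex.I := by ring
      rw [this]
      exact mul_ne_zero two_ne_zero Complex.I_ne_zero
    rcases smul_eq_zero.mp h2 with h | h
    · exact absurd h h3
    · rw [h, zero_add]; exact hb
  · exact hΓm z

include hcompl hΓp hΓm in
lemma mem_Vp_iff (z : V) : Γ z = Complex.I • z ↔ z ∈ Vp := by
  constructor
  · intro h
    obtain ⟨a, ha, b, hb, rfl⟩ := exists_decomp' Vp Vm hcompl z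
    have h1 : Γ a + Γ b = Complex.I • a + Complex.I • b := by
      rw [← map_add, h, smul_add]
    rw [hΓp a ha, hΓm b hb] at h1
    have h2 : (Complex.I - (-Complex.I)) • b = 0 := by
      rw [sub_smul, sub_eq_zero]
      exact (add_left_cancel h1).symm
    have h3 : Complex.I - (-Complex.I) ≠ 0 := by
      have : Complex.I - (-Complex.I) = 2 * Complex.I := by ring
      rw [this]
      exact mul_ne_zero two_ne_zero Complex.I_ne_zero
    rcases smul_eq_zero.mp h2 with h | h
    · exact absurd h h3
    · rw [h, add_zero]; exact ha
  · exact hΓp z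

include hcompl hΓp hΓm in
lemma anticomm (T : V →ₗ[ℂ] V) (hoddp : ∀ x ∈ Vp, T x ∈ Vm) (hoddm : ∀ x ∈ Vm, T x ∈ Vp)
    (x : V) : Γ (T x) = -T (Γ x) := by
  obtain ⟨a, ha, b, hb, rfl⟩ := exists_decomp' Vp Vm hcompl x
  have hca : Γ (T a) = -T (Γ a) := by
    rw [hΓm _ (hoddp a ha), hΓp a ha, map_smul, neg_smul]
  have hcb : Γ (T b) = -T (Γ b) := by
    rw [hΓp _ (hoddm b hb), hΓm b hb, map_smul, neg_smul, neg_neg]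
  rw [map_add, map_add, hca, hcb, map_add, map_add]
  abel

include hcompl hΓp hΓm in
lemma lagrangian_of_T (T : V →ₗ[ℂ] V)
    (hinv : T ∘ₗ T = LinearMap.id)
    (hu : ∀ x y : V, (inner ℂ (T x) (T y) : ℂ) = inner ℂ x y)
    (hoddp : ∀ x ∈ Vp, T x ∈ Vm) (hoddm : ∀ x ∈ Vm, T x ∈ Vp) :
    (∀ x ∈ LinearMap.ker (T - LinearMap.id), ∀ y ∈ LinearMap.ker (T - LinearMap.id),
      (inner ℂ (Γ x) y : ℂ) = 0) ∧
    2 * Module.finrank ℂ (LinearMap.ker (T - LinearMap.id)) = Module.finrank ℂ V := by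
  constructor
  · intro x hx y hy
    rw [mem_ker_sub_iff] at hx hy
    have h1 : (inner ℂ (Γ x) y : ℂ) = -(inner ℂ (Γ x) y : ℂ) := by
      calc (inner ℂ (Γ x) y : ℂ) = inner ℂ (Γ (T x)) (T y) := by rw [hx, hy]
        _ = (inner ℂ (-T (Γ x)) (T y) : ℂ) := by
            rw [anticomm Vp Vm hcompl Γ hΓp hΓm T hoddp hoddm x]
        _ = -(inner ℂ (T (Γ x)) (T y) : ℂ) := inner_neg_left _ _
        _ = -(inner ℂ (Γ x) y : ℂ) := by rw [hu (Γ x) y]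
    linear_combination h1 / 2
  · have hmap : Submodule.map Γ (LinearMap.ker (T - LinearMap.id))
        = LinearMap.ker (T + LinearMap.id) := by
      apply le_antisymm
      · intro y hy
        obtain ⟨x, hx, rfl⟩ := Submodule.mem_map.mp hy
        rw [mem_ker_sub_iff] at hx
        rw [mem_ker_add_iff]
        have h := anticomm Vp Vm hcompl Γ hΓp hΓm T hoddp hoddm x
        rw [hx] at h
        exact neg_eq_iff_eq_neg.mp h.symm
      · intro y hy
        rw [mem_ker_add_iff] at hy
        refine Submodule.mem_map.mpr ⟨-Γ y, ?_, ?_⟩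
        · rw [mem_ker_sub_iff, map_neg]
          have h := anticomm Vp Vm hcompl Γ hΓp hΓm T hoddp hoddm y
          rw [hy, map_neg] at h
          exact neg_inj.mpr (neg_injective h).symm
        · rw [map_neg, gamma_sq Vp Vm hcompl Γ hΓp hΓm y, neg_neg]
    have heq : Module.finrank ℂ (LinearMap.ker (T - LinearMap.id))
        = Module.finrank ℂ (LinearMap.ker (T + LinearMap.id)) := by
      rw [← hmap]
      exact (Submodule.equivMapOfInjective Γ (gamma_inj Vp Vm hcompl Γ hΓp hΓm)
        (LinearMap.ker (T - LinearMap.id))).finrank_eq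
    have := ker_finranks T hinv
    omega

end Gamma

section Lagr

variable {V : Type*} [NormedAddCommGroup V] [InnerProductSpace ℂ V] [FiniteDimensional ℂ V]
  (Γ : V →ₗ[ℂ] V) (hΓsq : ∀ x, Γ (Γ x) = -x)
  (L : Submodule ℂ V)
  (hiso : ∀ x ∈ L, ∀ y ∈ L, (inner ℂ (Γ x) y : ℂ) = 0)
  (hdim : 2 * Module.finrank ℂ L = Module.finrank ℂ V)

include hΓsq hiso hdim in
lemma mapL_eq : Submodule.map Γ L = Lᗮ := by
  have hΓinj : Function.Injective Γ := by
    intro x y h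
    have hx := hΓsq x
    rw [h, hΓsq y] at hx
    exact neg_injective hx.symm
  have hle : Submodule.map Γ L ≤ Lᗮ := by
    intro y hy
    obtain ⟨x, hx, rfl⟩ := Submodule.mem_map.mp hy
    rw [Submodule.mem_orthogonal]
    intro u hu
    exact inner_eq_zero_symm.mp (hiso x hx u hu)
  apply Submodule.eq_of_le_of_finrank_eq hle
  have h1 : Module.finrank ℂ (Submodule.map Γ L) = Module.finrank ℂ L :=
    (Submodule.equivMapOfInjective Γ hΓinj L).finrank_eq.symm
  have h2 := Submodule.finrank_add_finrank_orthogonal L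
  omega

include hΓsq hiso hdim in
lemma gamma_orth_mem : ∀ w ∈ Lᗮ, Γ w ∈ L := by
  intro w hw
  rw [← mapL_eq Γ hΓsq L hiso hdim] at hw
  obtain ⟨u, hu, rfl⟩ := Submodule.mem_map.mp hw
  rw [hΓsq u]
  exact L.neg_mem hu

include hΓsq hiso hdim in
lemma proj_gamma (x : V) :
    (orthogonalProjection L (Γ x) : V) = Γ x - Γ (orthogonalProjection L x : V) := by
  set p : V := (orthogonalProjection L x : V) with hp
  have hpL : p ∈ L := SetLike.coe_mem _
  have hw : x - p ∈ Lᗮ := sub_starProjection_mem_orthogonal (K := L) x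
  have h1 : Γ p ∈ Lᗮ := by
    rw [← mapL_eq Γ hΓsq L hiso hdim]
    exact Submodule.mem_map_of_mem hpL
  have h2 : Γ (x - p) ∈ L := gamma_orth_mem Γ hΓsq L hiso hdim _ hw
  have hsum : Γ x = Γ p + Γ (x - p) := by
    rw [← map_add]
    congr 1
    abel
  rw [hsum, map_add, Submodule.coe_add,
    Submodule.orthogonalProjectionOnto_apply_of_mem_orthogonal h1,
    coe_orthogonalProjectionOnto_apply L (Γ (x - p)), starProjection_eq_self_iff.mpr h2, ZeroMemClass.coe_zero, zero_add, map_sub]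
  abel

include hΓsq hiso hdim in
lemma refl_gamma (x : V) (c : ℂ) (hc : Γ x = c • x) :
    Γ (2 • (orthogonalProjection L x : V) - x)
      = (-c) • (2 • (orthogonalProjection L x : V) - x) := by
  set p : V := (orthogonalProjection L x : V) with hp
  have h := proj_gamma Γ hΓsq L hiso hdim x
  rw [hc, map_smul, Submodule.coe_smul] at h
  -- h : c • p = c • x - Γ p
  have hgp : Γ p = c • x - c • p := by
    rw [eq_sub_iff_add_eq, add_comm]
    exact eq_sub_iff_add_eq.mp h
  rw [two_smul, map_sub, map_add, hgp, hc]
  module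

end Lagr

/-- On a finite-dimensional complex inner ℂ product space `V = V⁺ ⊕ V⁻` with chirality
operator `Γ` and form `ω x y = ⟪Γ x, y⟫`, the assignment `T ↦ Λ_T = ker (T - id)` is
a bijection from the set of odd self-adjoint unitaries on `V` onto the set of
Lagrangian subspaces of `(V, ω)`, whose inverse sends a Lagrangian `L` to the linear
map equal to `+id` on `L` and to `-id` on `Lᗮ`. -/
theorem odd_selfadjoint_unitaries_biject_with_lagrangians
    {V : Type*} [NormedAddCommGroup V] [InnerProductSpace ℂ V] [FiniteDimensional ℂ V]
    (Vp Vm : Submodule ℂ V) (hcompl : IsCompl Vp Vm)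
    (horth : ∀ x ∈ Vp, ∀ y ∈ Vm, (inner ℂ x y : ℂ) = 0)
    (Γ : V →ₗ[ℂ] V)
    (hΓp : ∀ x ∈ Vp, Γ x = Complex.I • x)
    (hΓm : ∀ x ∈ Vm, Γ x = (-Complex.I) • x) :
    Set.BijOn (fun T : V →ₗ[ℂ] V => LinearMap.ker (T - LinearMap.id))
      { T : V →ₗ[ℂ] V |
          (∀ x y : V, (inner ℂ (T x) y : ℂ) = inner ℂ x (T y)) ∧
          T ∘ₗ T = LinearMap.id ∧
          (∀ x y : V, (inner ℂ (T x) (T y) : ℂ) = inner ℂ x y) ∧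
          (∀ x ∈ Vp, T x ∈ Vm) ∧ (∀ x ∈ Vm, T x ∈ Vp) }
      { L : Submodule ℂ V |
          (∀ x ∈ L, ∀ y ∈ L, (inner ℂ (Γ x) y : ℂ) = 0) ∧
          2 * Module.finrank ℂ L = Module.finrank ℂ V } ∧
    -- the inverse of this bijection sends `L` to `+id` on `L` and `-id` on `Lᗮ`:
    ∀ L : Submodule ℂ V,
      ((∀ x ∈ L, ∀ y ∈ L, (inner ℂ (Γ x) y : ℂ) = 0) ∧
        2 * Module.finrank ℂ L = Module.finrank ℂ V) →
      ∀ T : V →ₗ[ℂ] V,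
        ((∀ x y : V, (inner ℂ (T x) y : ℂ) = inner ℂ x (T y)) ∧
          T ∘ₗ T = LinearMap.id ∧
          (∀ x y : V, (inner ℂ (T x) (T y) : ℂ) = inner ℂ x y) ∧
          (∀ x ∈ Vp, T x ∈ Vm) ∧ (∀ x ∈ Vm, T x ∈ Vp)) →
        LinearMap.ker (T - LinearMap.id) = L →
        (∀ x ∈ L, T x = x) ∧ (∀ x ∈ Lᗮ, T x = -x) := by
  have hΓsq := gamma_sq Vp Vm hcompl Γ hΓp hΓm
  constructor
  · refine ⟨?_, ?_, ?_⟩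
    · -- MapsTo
      intro T hT
      obtain ⟨hsa, hinv, hu, hop, hom⟩ := hT
      exact lagrangian_of_T Vp Vm hcompl Γ hΓp hΓm T hinv hu hop hom
    · -- InjOn
      intro T₁ h₁ T₂ h₂ hker
      have hker' : LinearMap.ker (T₁ - LinearMap.id) = LinearMap.ker (T₂ - LinearMap.id) := hker
      obtain ⟨hsa₁, hinv₁, -, -, -⟩ := h₁
      obtain ⟨hsa₂, hinv₂, -, -, -⟩ := h₂
      have horth1 := ker_add_eq_orth T₁ hsa₁ hinv₁
      have horth2 := ker_add_eq_orth T₂ hsa₂ hinv₂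
      rw [hker'] at horth1
      apply LinearMap.ext
      intro x
      have hC : IsCompl (LinearMap.ker (T₂ - LinearMap.id))
          (LinearMap.ker (T₂ - LinearMap.id))ᗮ :=
        Submodule.isCompl_orthogonal_of_hasOrthogonalProjection
      obtain ⟨p, hp, q, hq, rfl⟩ := exists_decomp' _ _ hC x
      have e1 : T₁ p = p := (mem_ker_sub_iff T₁ p).mp (by rw [hker']; exact hp)
      have e2 : T₂ p = p := (mem_ker_sub_iff T₂ p).mp hp
      have e3 : T₁ q = -q := (mem_ker_add_iff T₁ q).mp (by rw [horth1]; exact hq)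
      have e4 : T₂ q = -q := (mem_ker_add_iff T₂ q).mp (by rw [horth2]; exact hq)
      rw [map_add, map_add, e1, e2, e3, e4]
    · -- SurjOn
      intro L hL
      obtain ⟨hiso, hdim⟩ := hL
      set T : V →ₗ[ℂ] V := (reflection L).toLinearEquiv.toLinearMap with hTdef
      have hT : ∀ x, T x = reflection L x := fun _ => rfl
      have hTT : ∀ x, T (T x) = x := fun x => by
        rw [hT, hT]; exact reflection_reflection L x
      have hu : ∀ x y : V, (inner ℂ (T x) (T y) : ℂ) = inner ℂ x y := fun x y => by
        rw [hT, hT]; exact (reflection L).inner_map_map x y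
      have hsa : ∀ x y : V, (inner ℂ (T x) y : ℂ) = inner ℂ x (T y) := fun x y => by
        conv_lhs => rw [← hTT y]
        exact hu x (T y)
      have hinv : T ∘ₗ T = LinearMap.id := LinearMap.ext fun x => by simpa using hTT x
      have hker : LinearMap.ker (T - LinearMap.id) = L := by
        ext x
        rw [mem_ker_sub_iff, hT]
        exact reflection_eq_self_iff x
      have hodd1 : ∀ x ∈ Vp, T x ∈ Vm := by
        intro x hx
        rw [← mem_Vm_iff Vp Vm hcompl Γ hΓp hΓm, hT, Submodule.reflection_apply]
        exact refl_gamma Γ hΓsq L hiso hdim x Complex.I (hΓp x hx)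
      have hodd2 : ∀ x ∈ Vm, T x ∈ Vp := by
        intro x hx
        rw [← mem_Vp_iff Vp Vm hcompl Γ hΓp hΓm, hT, Submodule.reflection_apply]
        have := refl_gamma Γ hΓsq L hiso hdim x (-Complex.I) (hΓm x hx)
        rw [neg_neg] at this
        exact this
      exact ⟨T, ⟨hsa, hinv, hu, hodd1, hodd2⟩, hker⟩
  · intro L hL T hT hker
    obtain ⟨hsa, hinv, -, -, -⟩ := hT
    constructor
    · intro x hx
      exact (mem_ker_sub_iff T x).mp (by rw [hker]; exact hx)
    · intro x hx
      refine (mem_ker_add_iff T x).mp ?_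
      rw [ker_add_eq_orth T hsa hinv, hker]
      exact hx
end
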